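/- arXiv:1511.08009 — 3 statements merged into one kernel-verified Lean document; each statement's English description precedes it below -/
import Mathlib

section
/- Let C be a planar convex body that is k_C-rotationally symmetric about a point p in its interior, where k_C is a composite integer whose smallest divisor χ greater than 1 satisfies χ ≥ 3. Then d_M(P_a) = d_M(P_b) for all divisors a, b > 1 of k_C (a chain of equalities among the values d_M over the divisors of k_C greater than 1) if and only if χ ≥ 7. -/
set_option maxHeartbeats 1000000


open Metric Set

/-- Rotation of angle `α` about the point `p` in the plane `ℂ`. -/
noncomputable def rot (p : ℂ) (α : ℝ) : ℂ → ℂ :=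
  fun z => p + Complex.exp (α * Complex.I) * (z - p)

/-- A planar convex body: a compact convex subset of the plane with nonempty interior. -/
def IsConvexBody (C : Set ℂ) : Prop :=
  IsCompact C ∧ Convex ℝ C ∧ (interior C).Nonempty

/-- `C` is `k`-rotationally symmetric about `p`: the rotation of angle `2π/k`
about `p` maps `C` onto itself. -/
def IsRotSym (C : Set ℂ) (p : ℂ) (k : ℕ) : Prop :=
  rot p (2 * Real.pi / k) '' C = C

/-- The closed convex sector at `p` spanned by `x - p` and `ρ_k(x) - p`. -/
noncomputable def sector (p x : ℂ) (k : ℕ) : Set ℂ :=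
  {z | ∃ a b : ℝ, 0 ≤ a ∧ 0 ≤ b ∧
    z = p + (a : ℂ) * (x - p) + (b : ℂ) * (rot p (2 * Real.pi / k) x - p)}

/-- The maximum relative diameter of the standard `k`-partition of `C`
(with center `p` and endpoint `x`): the diameter of one piece `C ∩ S_k`. -/
noncomputable def dM (C : Set ℂ) (p x : ℂ) (k : ℕ) : ℝ :=
  Metric.diam (C ∩ sector p x k)

/-- The circumradius of `C` with respect to `p`: `sup_{y ∈ C} dist p y`. -/
noncomputable def circumrad (C : Set ℂ) (p : ℂ) : ℝ :=
  ⨆ y ∈ C, dist p y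

lemma rot_sub (p : ℂ) (α : ℝ) (z : ℂ) :
    rot p α z - p = Complex.exp (α * Complex.I) * (z - p) := by
  simp [rot]

lemma rot_iter (p : ℂ) (α : ℝ) (n : ℕ) (z : ℂ) :
    (rot p α)^[n] z = p + Complex.exp (((n : ℝ) * α : ℝ) * Complex.I) * (z - p) := by
  induction n with
  | zero => simp
  | succ n ih =>
    rw [Function.iterate_succ_apply', ih]
    show p + Complex.exp (↑α * Complex.I) * _ = _
    rw [add_sub_cancel_left, ← mul_assoc, ← Complex.exp_add]
    congr 2
    push_cast
    ring

lemma rotsym_iterate {C : Set ℂ} {p : ℂ} {α : ℝ}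
    (h : rot p α '' C = C) (n : ℕ) : (rot p α)^[n] '' C = C := by
  induction n with
  | zero => simp
  | succ n ih => rw [Function.iterate_succ', Set.image_comp, ih, h]

lemma rotsym_div {C : Set ℂ} {p : ℂ} {kC a : ℕ} (hsym : IsRotSym C p kC)
    (hk : 0 < kC) (ha : 0 < a) (hdvd : a ∣ kC) : IsRotSym C p a := by
  have hcast : ((kC / a : ℕ) : ℝ) = (kC : ℝ) / a := by
    rw [Nat.cast_div hdvd]
    exact_mod_cast ha.ne'
  have h1 : rot p (2 * Real.pi / a) = (rot p (2 * Real.pi / kC))^[kC / a] := by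
    funext z
    rw [rot_iter, hcast]
    have : (kC : ℝ) / a * (2 * Real.pi / kC) = 2 * Real.pi / a := by
      field_simp
    rw [this]
    rfl
  unfold IsRotSym at *
  rw [h1]
  exact rotsym_iterate hsym _

lemma mem_of_int_rot {C : Set ℂ} {p : ℂ} {a : ℕ} (hsym : IsRotSym C p a)
    (ha : 0 < a) {y : ℂ} (hy : y ∈ C) (n : ℤ) :
    p + Complex.exp ((((n : ℝ) * (2 * Real.pi / a) : ℝ) : ℂ) * Complex.I) * (y - p) ∈ C := by
  set β : ℝ := 2 * Real.pi / a with hβ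
  set m : ℕ := (n % (a : ℤ)).toNat with hmdef
  have ha' : (a : ℤ) ≠ 0 := by exact_mod_cast ha.ne'
  have hm : ((m : ℤ)) = n % (a : ℤ) := Int.toNat_of_nonneg (Int.emod_nonneg n ha')
  have hC' : (rot p β)^[m] '' C = C := rotsym_iterate hsym m
  have hmem : (rot p β)^[m] y ∈ C := by
    rw [← hC']; exact ⟨y, hy, rfl⟩
  rw [rot_iter] at hmem
  have hreal : (n : ℝ) * β = (m : ℝ) * β + ((n / (a : ℤ) : ℤ) : ℝ) * (2 * Real.pi) := by
    have hnm : (n : ℝ) - (m : ℝ) = ((n / (a : ℤ) : ℤ) : ℝ) * a := by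
      have h1 : (a : ℤ) * (n / (a : ℤ)) + n % (a : ℤ) = n := Int.mul_ediv_add_emod n a
      have h2 : (a : ℤ) * (n / (a : ℤ)) + (m : ℤ) = n := by rw [hm]; exact h1
      have := congrArg (fun t : ℤ => (t : ℝ)) h2
      push_cast at this
      linarith
    have hβa : (a : ℝ) * β = 2 * Real.pi := by
      rw [hβ]; field_simp
    have hn' : (n : ℝ) = (m : ℝ) + ((n / (a : ℤ) : ℤ) : ℝ) * a := by linarith
    rw [← hβa, hn']
    ring
  have key : Complex.exp ((((n : ℝ) * β : ℝ) : ℂ) * Complex.I)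
      = Complex.exp ((((m : ℝ) * β : ℝ) : ℂ) * Complex.I) := by
    rw [hreal]
    push_cast
    rw [add_mul, Complex.exp_add]
    have h1 : Complex.exp (((n / (a : ℤ) : ℤ) : ℂ) * (2 * (Real.pi : ℂ)) * Complex.I) = 1 := by
      have h2 := Complex.exp_int_mul_two_pi_mul_I (n / (a : ℤ))
      rw [← h2]
      congr 1
      ring
    rw [h1, mul_one]
  rw [key]
  exact hmem

-- scratch for decomp
lemma decomp {β φ s : ℝ} (hβ0 : 0 < β) (hβπ : β < Real.pi) (hφ0 : 0 ≤ φ)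
    (hφβ : φ ≤ β) (hs : 0 ≤ s) :
    ∃ a b : ℝ, 0 ≤ a ∧ 0 ≤ b ∧ a + b ≤ s / Real.cos (β / 2) ∧
      (s : ℂ) * Complex.exp ((φ : ℝ) * Complex.I)
        = (a : ℂ) + (b : ℂ) * Complex.exp ((β : ℝ) * Complex.I) := by
  have hsβ : 0 < Real.sin β := Real.sin_pos_of_pos_of_lt_pi hβ0 hβπ
  have hc2 : 0 < Real.cos (β / 2) :=
    Real.cos_pos_of_mem_Ioo ⟨by linarith [Real.pi_pos], by linarith⟩
  have hs1 : 0 ≤ Real.sin (β - φ) :=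
    Real.sin_nonneg_of_nonneg_of_le_pi (by linarith) (by linarith)
  have hs2 : 0 ≤ Real.sin φ :=
    Real.sin_nonneg_of_nonneg_of_le_pi hφ0 (by linarith)
  refine ⟨s * Real.sin (β - φ) / Real.sin β, s * Real.sin φ / Real.sin β,
    by positivity, by positivity, ?_, ?_⟩
  · have hsum : Real.sin (β - φ) + Real.sin φ ≤ 2 * Real.sin (β / 2) := by
      have e1 := Real.sin_sub β φ
      have e2 := Real.sin_two_mul (β / 2)
      rw [show 2 * (β / 2) = β by ring] at e2
      have e3 := Real.cos_sq (β / 2)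
      rw [show 2 * (β / 2) = β by ring] at e3
      have e3b := Real.sin_sq_add_cos_sq (β / 2)
      have e4 := Real.cos_sub (β / 2) φ
      have e5 : Real.cos (β / 2 - φ) ≤ 1 := Real.cos_le_one _
      have e6 : 0 ≤ Real.sin (β / 2) :=
        Real.sin_nonneg_of_nonneg_of_le_pi (by linarith) (by linarith [Real.pi_pos])
      have hcb : Real.cos β = 2 * Real.cos (β / 2) ^ 2 - 1 := by linarith [e3]
      have key : Real.sin (β - φ) + Real.sin φ
          = 2 * Real.sin (β / 2) * Real.cos (β / 2 - φ) := by
        rw [e1, e2, hcb, e4]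
        linear_combination (-2 * Real.sin φ) * e3b
      nlinarith [mul_nonneg e6 (by linarith : 0 ≤ 1 - Real.cos (β / 2 - φ)), key]
    have hsin2 : Real.sin β = 2 * Real.sin (β / 2) * Real.cos (β / 2) := by
      have := Real.sin_two_mul (β / 2)
      rw [show 2 * (β / 2) = β by ring] at this
      linarith
    rw [← add_div, div_le_div_iff₀ hsβ hc2]
    have hsb2 : 0 < Real.sin (β / 2) := by nlinarith
    nlinarith [mul_le_mul_of_nonneg_left hsum hs]
  · have hre : s * Real.sin (β - φ) / Real.sin β
        + (s * Real.sin φ / Real.sin β) * Real.cos β = s * Real.cos φ := by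
      rw [Real.sin_sub]
      field_simp
      ring
    have him : (s * Real.sin φ / Real.sin β) * Real.sin β = s * Real.sin φ := by
      field_simp
    rw [Complex.exp_mul_I, Complex.exp_mul_I]
    simp only [← Complex.ofReal_cos, ← Complex.ofReal_sin, Complex.ext_iff, Complex.add_re,
      Complex.add_im, Complex.mul_re, Complex.mul_im, Complex.ofReal_re, Complex.ofReal_im,
      Complex.I_re, Complex.I_im]
    constructor
    · linear_combination -hre
    · linear_combination -him
lemma aux_abs_le {E : ℂ} (hE : ‖E‖ = 1) (hc : 1 / 2 ≤ E.re)
    {a1 b1 a2 b2 : ℝ} (ha1 : 0 ≤ a1) (hb1 : 0 ≤ b1) (ha2 : 0 ≤ a2) (hb2 : 0 ≤ b2)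
    (hle : ‖(a2 : ℂ) + (b2 : ℂ) * E‖ ≤ ‖(a1 : ℂ) + (b1 : ℂ) * E‖) :
    ‖((a1 : ℂ) + (b1 : ℂ) * E) - ((a2 : ℂ) + (b2 : ℂ) * E)‖
      ≤ ‖(a1 : ℂ) + (b1 : ℂ) * E‖ := by
  set w1 : ℂ := (a1 : ℂ) + (b1 : ℂ) * E with hw1
  set w2 : ℂ := (a2 : ℂ) + (b2 : ℂ) * E with hw2
  have habs1 : ‖w1‖ ≤ a1 + b1 := by
    calc ‖w1‖ ≤ ‖(a1 : ℂ)‖ + ‖(b1 : ℂ) * E‖ :=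
          norm_add_le _ _
    _ = a1 + b1 := by
        rw [norm_mul, hE, Complex.norm_real, Complex.norm_real, Real.norm_eq_abs, Real.norm_eq_abs,
          abs_of_nonneg ha1, abs_of_nonneg hb1, mul_one]
  have habs2 : ‖w2‖ ≤ a2 + b2 := by
    calc ‖w2‖ ≤ ‖(a2 : ℂ)‖ + ‖(b2 : ℂ) * E‖ :=
          norm_add_le _ _
    _ = a2 + b2 := by
        rw [norm_mul, hE, Complex.norm_real, Complex.norm_real, Real.norm_eq_abs, Real.norm_eq_abs,
          abs_of_nonneg ha2, abs_of_nonneg hb2, mul_one]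
  have hnsq : Complex.normSq w2 ≤ (a1 + b1) * (a2 + b2) := by
    have h1 : Complex.normSq w2 = ‖w2‖ * ‖w2‖ := by
      rw [← Complex.sq_norm]; ring
    have h2 : ‖w2‖ * ‖w2‖ ≤ ‖w1‖ * ‖w2‖ :=
      mul_le_mul_of_nonneg_right hle (norm_nonneg _)
    have h3 : ‖w1‖ * ‖w2‖ ≤ (a1 + b1) * (a2 + b2) :=
      mul_le_mul habs1 habs2 (norm_nonneg _) (by linarith)
    linarith
  have hEnorm : E.re ^ 2 + E.im ^ 2 = 1 := by
    have := Complex.sq_norm E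
    rw [hE] at this
    simp [Complex.normSq_apply] at this
    nlinarith [this]
  have hRe : (w1 * (starRingEnd ℂ) w2).re
      = a1 * a2 + b1 * b2 * (E.re ^ 2 + E.im ^ 2) + (a1 * b2 + a2 * b1) * E.re := by
    simp [hw1, hw2, Complex.mul_re, Complex.add_re, Complex.add_im, Complex.mul_im,
      Complex.conj_re, Complex.conj_im, Complex.ofReal_re, Complex.ofReal_im]
    ring
  have hRe' : (a1 + b1) * (a2 + b2) ≤ 2 * (w1 * (starRingEnd ℂ) w2).re := by
    rw [hRe, hEnorm]
    nlinarith [mul_nonneg ha1 hb2, mul_nonneg ha2 hb1, mul_nonneg ha1 ha2,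
      mul_nonneg hb1 hb2]
  have hfin : Complex.normSq (w1 - w2) ≤ Complex.normSq w1 := by
    rw [Complex.normSq_sub]
    linarith
  have := Real.sqrt_le_sqrt hfin
  rwa [← Complex.norm_def, ← Complex.norm_def] at this
lemma dist_le_in_sector {p x : ℂ} {k : ℕ} (hk : 6 ≤ k) {u v : ℂ}
    (hu : u ∈ sector p x k) (hv : v ∈ sector p x k) :
    dist u v ≤ max (dist p u) (dist p v) := by
  obtain ⟨a1, b1, ha1, hb1, hu'⟩ := hu
  obtain ⟨a2, b2, ha2, hb2, hv'⟩ := hv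
  set E : ℂ := Complex.exp ((2 * Real.pi / k : ℝ) * Complex.I) with hEdef
  have hk0 : (0 : ℝ) < k := by exact_mod_cast by omega
  have hE : ‖E‖ = 1 := Complex.norm_exp_ofReal_mul_I _
  have hcre : 1 / 2 ≤ E.re := by
    have h1 : E.re = Real.cos (2 * Real.pi / k) := by
      rw [hEdef, Complex.exp_ofReal_mul_I_re]
    have h2 : Real.cos (Real.pi / 3) ≤ Real.cos (2 * Real.pi / k) := by
      apply Real.cos_le_cos_of_nonneg_of_le_pi
      · positivity
      · linarith [Real.pi_pos]
      · rw [div_le_div_iff₀ hk0 (by norm_num)]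
        have : (6 : ℝ) ≤ k := by exact_mod_cast hk
        nlinarith [Real.pi_pos]
    rw [h1, ← Real.cos_pi_div_three]
    exact h2
  have hu2 : u - p = ((a1 : ℂ) + (b1 : ℂ) * E) * (x - p) := by
    rw [hu', rot_sub]; ring
  have hv2 : v - p = ((a2 : ℂ) + (b2 : ℂ) * E) * (x - p) := by
    rw [hv', rot_sub]; ring
  have hduv : dist u v = ‖(((a1 : ℂ) + (b1 : ℂ) * E)
      - ((a2 : ℂ) + (b2 : ℂ) * E))‖ * ‖x - p‖ := by
    rw [Complex.dist_eq, show u - v = (u - p) - (v - p) by ring, hu2, hv2, ← sub_mul,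
      norm_mul]
  have hdu : dist p u = ‖(a1 : ℂ) + (b1 : ℂ) * E‖ * ‖x - p‖ := by
    rw [dist_comm, Complex.dist_eq, hu2, norm_mul]
  have hdv : dist p v = ‖(a2 : ℂ) + (b2 : ℂ) * E‖ * ‖x - p‖ := by
    rw [dist_comm, Complex.dist_eq, hv2, norm_mul]
  rw [hduv, hdu, hdv, ← max_mul_of_nonneg _ _ (norm_nonneg (x - p))]
  apply mul_le_mul_of_nonneg_right _ (norm_nonneg (x - p))
  rcases le_total (‖(a2 : ℂ) + (b2 : ℂ) * E‖)
      (‖(a1 : ℂ) + (b1 : ℂ) * E‖) with h | h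
  · exact le_max_of_le_left (aux_abs_le hE hcre ha1 hb1 ha2 hb2 h)
  · apply le_max_of_le_right
    have h2 := aux_abs_le hE hcre ha2 hb2 ha1 hb1 h
    rwa [norm_sub_rev] at h2

lemma rotate_into_sector {C : Set ℂ} {p x : ℂ} {a : ℕ} (hsym : IsRotSym C p a)
    (ha3 : 3 ≤ a) (hxp : x ≠ p) {y : ℂ} (hy : y ∈ C) :
    ∃ y', y' ∈ C ∩ sector p x a ∧ dist p y' = dist p y := by
  have ha0 : 0 < a := by omega
  have ha0' : (0 : ℝ) < a := by exact_mod_cast ha0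
  set β : ℝ := 2 * Real.pi / a with hβ
  have hβ0 : 0 < β := by positivity
  have hβπ : β < Real.pi := by
    rw [hβ, div_lt_iff₀ ha0']
    have : (3 : ℝ) ≤ a := by exact_mod_cast ha3
    nlinarith [Real.pi_pos]
  set w : ℂ := (y - p) / (x - p) with hwdef
  set θ : ℝ := w.arg with hθ
  set j : ℤ := ⌊θ / β⌋ with hj
  set φ : ℝ := θ - j * β with hφ
  have hφ0 : 0 ≤ φ := by
    have := Int.floor_le (θ / β)
    rw [hφ]
    have : (j : ℝ) * β ≤ θ := by
      rw [hj]
      calc (⌊θ / β⌋ : ℝ) * β ≤ θ / β * β := by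
            apply mul_le_mul_of_nonneg_right (Int.floor_le _) hβ0.le
      _ = θ := by field_simp
    linarith
  have hφβ : φ ≤ β := by
    have h1 : θ / β < j + 1 := Int.lt_floor_add_one _
    have h2 : θ < (j + 1) * β := by
      calc θ = θ / β * β := by field_simp
      _ < ((j : ℝ) + 1) * β := by
            apply mul_lt_mul_of_pos_right h1 hβ0
    rw [hφ]
    nlinarith
  obtain ⟨A, B, hA, hB, _, heq⟩ :=
    decomp hβ0 hβπ hφ0 hφβ (norm_nonneg w)
  refine ⟨p + Complex.exp (((((-j : ℤ) : ℝ) * (2 * Real.pi / a) : ℝ) : ℂ) * Complex.I) * (y - p),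
    ⟨mem_of_int_rot hsym ha0 hy (-j), ?_⟩, ?_⟩
  · refine ⟨A, B, hA, hB, ?_⟩
    have hq : (x - p) ≠ 0 := sub_ne_zero.mpr hxp
    have hw : y - p = w * (x - p) := by
      rw [hwdef, div_mul_cancel₀ _ hq]
    have hwpolar : (‖w‖ : ℂ) * Complex.exp ((θ : ℝ) * Complex.I) = w :=
      Complex.norm_mul_exp_arg_mul_I w
    rw [← hwpolar] at hw
    have hexp : Complex.exp (((((-j : ℤ) : ℝ) * (2 * Real.pi / a) : ℝ) : ℂ) * Complex.I)
        * Complex.exp ((θ : ℝ) * Complex.I) = Complex.exp ((φ : ℝ) * Complex.I) := by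
      rw [← Complex.exp_add]
      congr 1
      rw [hφ, hβ]
      push_cast
      ring
    calc p + Complex.exp (((((-j : ℤ) : ℝ) * (2 * Real.pi / a) : ℝ) : ℂ) * Complex.I) * (y - p)
        = p + ((‖w‖ : ℂ) * Complex.exp ((φ : ℝ) * Complex.I)) * (x - p) := by
          rw [hw]
          rw [show Complex.exp (((((-j : ℤ) : ℝ) * (2 * Real.pi / a) : ℝ) : ℂ) * Complex.I) *
              ((‖w‖ : ℂ) * Complex.exp ((θ : ℝ) * Complex.I) * (x - p))
              = (‖w‖ : ℂ) * (Complex.exp (((((-j : ℤ) : ℝ) * (2 * Real.pi / a) : ℝ) : ℂ)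
                * Complex.I) * Complex.exp ((θ : ℝ) * Complex.I)) * (x - p) by ring, hexp]
      _ = p + (A : ℂ) * (x - p) + (B : ℂ) * (Complex.exp ((β : ℝ) * Complex.I) * (x - p)) := by
          rw [heq]; ring
      _ = p + (A : ℂ) * (x - p) + (B : ℂ) * (rot p (2 * Real.pi / a) x - p) := by
          rw [rot_sub, hβ]
  · rw [dist_comm, dist_comm p y, Complex.dist_eq, Complex.dist_eq, add_sub_cancel_left,
      norm_mul, Complex.norm_exp_ofReal_mul_I, one_mul]

lemma frontier_far {C : Set ℂ} {p z : ℂ} {k : ℕ} (hconv : Convex ℝ C)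
    (hsym : IsRotSym C p k) (hk : 3 ≤ k) (hz : z ∈ C) (hpC : p ∈ C) :
    ∀ f ∈ frontier C, dist p z * Real.cos (Real.pi / k) ≤ dist p f := by
  have hk0 : 0 < k := by omega
  have hk0' : (0 : ℝ) < k := by exact_mod_cast hk0
  set R : ℝ := dist p z with hR
  set ρ : ℝ := R * Real.cos (Real.pi / k) with hρ
  have hβhalf : Real.pi / k = (2 * Real.pi / k) / 2 := by ring
  have hc2 : 0 < Real.cos (Real.pi / k) := by
    apply Real.cos_pos_of_mem_Ioo
    constructor
    · have h0 : 0 < Real.pi / k := by positivity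
      linarith [Real.pi_pos]
    · rw [div_lt_div_iff₀ hk0' (by norm_num : (0:ℝ) < 2)]
      have : (3 : ℝ) ≤ k := by exact_mod_cast hk
      nlinarith [Real.pi_pos]
  -- Step A : the closed ball of radius ρ is inside C
  have hball : closedBall p ρ ⊆ C := by
    intro q hq
    rw [mem_closedBall, dist_comm] at hq
    by_cases hzR : R = 0
    · have h0 : dist p q ≤ 0 := by rw [hρ, hzR, zero_mul] at hq; exact hq
      have h1 : p = q := dist_le_zero.mp h0
      rw [← h1]; exact hpC
    have hR0 : 0 < R := lt_of_le_of_ne dist_nonneg (Ne.symm hzR)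
    have hzp : z - p ≠ 0 := by
      intro h
      apply hzR
      rw [hR, dist_comm, Complex.dist_eq, h, norm_zero]
    set β : ℝ := 2 * Real.pi / k with hβ
    have hβ0 : 0 < β := by positivity
    have hβπ : β < Real.pi := by
      rw [hβ, div_lt_iff₀ hk0']
      have : (3 : ℝ) ≤ k := by exact_mod_cast hk
      nlinarith [Real.pi_pos]
    set w : ℂ := (q - p) / (z - p) with hwdef
    set θ : ℝ := w.arg with hθ
    set j : ℤ := ⌊θ / β⌋ with hj
    set φ : ℝ := θ - j * β with hφ
    have hφ0 : 0 ≤ φ := by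
      have h1 : (j : ℝ) * β ≤ θ := by
        calc (
          (j : ℝ)) * β ≤ θ / β * β :=
            mul_le_mul_of_nonneg_right (Int.floor_le _) hβ0.le
        _ = θ := by field_simp
      rw [hφ]; linarith
    have hφβ : φ ≤ β := by
      have h1 : θ / β < j + 1 := Int.lt_floor_add_one _
      have h2 : θ < ((j : ℝ) + 1) * β := by
        calc θ = θ / β * β := by field_simp
        _ < ((j : ℝ) + 1) * β := mul_lt_mul_of_pos_right h1 hβ0
      rw [hφ]; nlinarith
    obtain ⟨A, B, hA, hB, hAB, heq⟩ := decomp hβ0 hβπ hφ0 hφβ (norm_nonneg w)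
    have hwabs : ‖w‖ ≤ Real.cos (β / 2) := by
      have h1 : ‖w‖ = dist p q / R := by
        rw [hwdef, norm_div,
          show dist p q = ‖q - p‖ by rw [dist_comm, Complex.dist_eq],
          show R = ‖z - p‖ by rw [hR, dist_comm, Complex.dist_eq]]
      rw [h1, div_le_iff₀ hR0]
      rw [hρ, hβhalf] at hq
      linarith [hq]
    have hAB1 : A + B ≤ 1 := by
      have hcb : 0 < Real.cos (β / 2) := by rw [← hβhalf]; exact hc2
      have := hAB.trans (div_le_one_of_le₀ (by exact hwabs) hcb.le)
      exact this
    -- the two rotated copies of z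
    have hz1 : p + Complex.exp ((((j : ℝ) * (2 * Real.pi / k) : ℝ) : ℂ) * Complex.I)
        * (z - p) ∈ C := mem_of_int_rot hsym hk0 hz j
    have hz2 : p + Complex.exp (((((j + 1 : ℤ) : ℝ) * (2 * Real.pi / k) : ℝ) : ℂ) * Complex.I)
        * (z - p) ∈ C := mem_of_int_rot hsym hk0 hz (j + 1)
    set z1 : ℂ := p + Complex.exp ((((j : ℝ) * (2 * Real.pi / k) : ℝ) : ℂ) * Complex.I)
        * (z - p) with hz1def
    set z2 : ℂ := p + Complex.exp (((((j + 1 : ℤ) : ℝ) * (2 * Real.pi / k) : ℝ) : ℂ) * Complex.I)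
        * (z - p) with hz2def
    -- q = p + A (z1 - p) + B (z2 - p)
    have hqrep : q = p + (A : ℂ) * (z1 - p) + (B : ℂ) * (z2 - p) := by
      have hw : q - p = w * (z - p) := by rw [hwdef, div_mul_cancel₀ _ hzp]
      have hwpolar : (‖w‖ : ℂ) * Complex.exp ((θ : ℝ) * Complex.I) = w :=
        Complex.norm_mul_exp_arg_mul_I w
      rw [← hwpolar] at hw
      have he1 : Complex.exp ((θ : ℝ) * Complex.I)
          = Complex.exp ((φ : ℝ) * Complex.I)
            * Complex.exp ((((j : ℝ) * (2 * Real.pi / k) : ℝ) : ℂ) * Complex.I) := by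
        rw [← Complex.exp_add]
        congr 1
        rw [hφ, hβ]
        push_cast
        ring
      have he2 : Complex.exp ((β : ℝ) * Complex.I)
            * Complex.exp ((((j : ℝ) * (2 * Real.pi / k) : ℝ) : ℂ) * Complex.I)
          = Complex.exp (((((j + 1 : ℤ) : ℝ) * (2 * Real.pi / k) : ℝ) : ℂ) * Complex.I) := by
        rw [← Complex.exp_add]
        congr 1
        rw [hβ]
        push_cast
        ring
      have : q = p + (q - p) := by ring
      rw [this, hw, he1, hz1def, hz2def]
      rw [show p + (A:ℂ) * (p + Complex.exp ((((j : ℝ) * (2 * Real.pi / k) : ℝ) : ℂ) * Complex.I)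
            * (z - p) - p)
          + (B:ℂ) * (p + Complex.exp (((((j + 1 : ℤ) : ℝ) * (2 * Real.pi / k) : ℝ) : ℂ)
            * Complex.I) * (z - p) - p)
          = p + ((A:ℂ) + (B:ℂ) * Complex.exp ((β : ℝ) * Complex.I))
            * (Complex.exp ((((j : ℝ) * (2 * Real.pi / k) : ℝ) : ℂ) * Complex.I) * (z - p)) by
        rw [← he2]; ring]
      rw [← heq]
      ring
    -- convexity
    rw [hqrep]
    by_cases htz : A + B = 0
    · have hA0 : A = 0 := by linarith
      have hB0 : B = 0 := by linarith
      rw [hA0, hB0]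
      simpa using hpC
    · have ht0 : 0 < A + B := lt_of_le_of_ne (by linarith) (Ne.symm htz)
      have hm : (A / (A + B)) • z1 + (B / (A + B)) • z2 ∈ C := by
        apply hconv hz1 hz2 (by positivity) (by positivity)
        field_simp
      have := hconv hpC hm (by linarith : (0:ℝ) ≤ 1 - (A + B)) (by linarith : (0:ℝ) ≤ A + B)
        (by ring)
      rw [smul_add, smul_smul, smul_smul] at this
      have e1 : (A + B) * (A / (A + B)) = A := by field_simp
      have e2 : (A + B) * (B / (A + B)) = B := by field_simp
      rw [e1, e2] at this
      convert this using 1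
      simp only [Complex.real_smul]
      push_cast
      ring
  -- Step B : frontier points are at distance at least ρ
  intro f hf
  by_contra hlt
  push_neg at hlt
  have hfball : f ∈ ball p ρ := by rwa [mem_ball, dist_comm]
  have hsub : ball p ρ ⊆ interior C :=
    interior_maximal (ball_subset_closedBall.trans hball) isOpen_ball
  exact hf.2 (hsub hfball)

lemma chord_len {p x : ℂ} {k : ℕ} (hk : 3 ≤ k) :
    dist x (rot p (2 * Real.pi / k) x) = 2 * Real.sin (Real.pi / k) * dist p x := by
  have hk0' : (0 : ℝ) < k := by exact_mod_cast by omega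
  set β : ℝ := 2 * Real.pi / k with hβ
  have h1 : x - rot p β x = (1 - Complex.exp ((β : ℝ) * Complex.I)) * (x - p) := by
    rw [rot]; ring
  rw [Complex.dist_eq, h1, norm_mul]
  have h2 : ‖1 - Complex.exp ((β : ℝ) * Complex.I)‖ = 2 * Real.sin (Real.pi / k) := by
    have hsin : 0 ≤ Real.sin (Real.pi / k) := by
      apply Real.sin_nonneg_of_nonneg_of_le_pi
      · positivity
      · rw [div_le_iff₀ hk0']
        have : (1 : ℝ) ≤ k := by exact_mod_cast by omega
        nlinarith [Real.pi_pos]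
    have hns : Complex.normSq (1 - Complex.exp ((β : ℝ) * Complex.I))
        = (2 * Real.sin (Real.pi / k)) ^ 2 := by
      have hre : (1 - Complex.exp ((β : ℝ) * Complex.I)).re = 1 - Real.cos β := by
        simp [Complex.exp_ofReal_mul_I_re]
      have him : (1 - Complex.exp ((β : ℝ) * Complex.I)).im = -Real.sin β := by
        simp [Complex.exp_ofReal_mul_I_im]
      rw [Complex.normSq_apply, hre, him]
      have hhalf : Real.sin (Real.pi / k) ^ 2 = (1 - Real.cos β) / 2 := by
        have := Real.cos_sq (β / 2)
        rw [show 2 * (β / 2) = β by ring] at this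
        have h3 := Real.sin_sq_add_cos_sq (β / 2)
        have h4 : β / 2 = Real.pi / k := by rw [hβ]; ring
        rw [h4] at this h3
        linarith
      have h5 := Real.sin_sq_add_cos_sq β
      nlinarith [hhalf, h5]
    rw [Complex.norm_def, hns, Real.sqrt_sq (by linarith)]
  rw [h2, dist_comm, Complex.dist_eq]

lemma dM_le_R {C : Set ℂ} {p x : ℂ} {k : ℕ} (hk6 : 6 ≤ k) {R : ℝ} (hR0 : 0 ≤ R)
    (hR : ∀ y ∈ C, dist p y ≤ R) : dM C p x k ≤ R := by
  apply Metric.diam_le_of_forall_dist_le hR0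
  intro u hu v hv
  exact (dist_le_in_sector hk6 hu.2 hv.2).trans (max_le (hR u hu.1) (hR v hv.1))

lemma R_le_dM {C : Set ℂ} {p x : ℂ} {k : ℕ} (hbd : Bornology.IsBounded C)
    (hsym : IsRotSym C p k) (hk3 : 3 ≤ k) (hxp : x ≠ p) (hpC : p ∈ C)
    {z : ℂ} (hz : z ∈ C) : dist p z ≤ dM C p x k := by
  obtain ⟨y', hy', hdist⟩ := rotate_into_sector hsym hk3 hxp hz
  rw [← hdist]
  have hps : p ∈ C ∩ sector p x k :=
    ⟨hpC, 0, 0, le_refl 0, le_refl 0, by push_cast; ring⟩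
  exact Metric.dist_le_diam_of_mem (hbd.subset inter_subset_left) hps hy'

/-- For a multi-rotationally symmetric planar convex body with composite
maximal degree `k_C` and minimal degree `χ = minFac k_C ≥ 3`, the values
`d_M(P_a)` over all divisors `a > 1` of `k_C` all coincide iff `χ ≥ 7`. -/
theorem stmt_11 (C : Set ℂ) (p x : ℂ) (kC : ℕ) (hC : IsConvexBody C)
    (hk2 : 2 ≤ kC) (hcomp : ¬ kC.Prime) (hmin : 3 ≤ kC.minFac)
    (hsym : IsRotSym C p kC) (hp : p ∈ interior C)
    (hx : x ∈ frontier C) (hxr : dist p x = infDist p (frontier C)) :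
    (∀ a b : ℕ, a ∣ kC → b ∣ kC → 1 < a → 1 < b → dM C p x a = dM C p x b)
      ↔ 7 ≤ kC.minFac := by
  obtain ⟨hcpt, hconv, hint⟩ := hC
  have hCx : x ∈ C := hcpt.isClosed.frontier_subset hx
  have hpC : p ∈ C := interior_subset hp
  have hxp : x ≠ p := by
    intro h
    rw [frontier, Set.mem_diff] at hx
    exact hx.2 (h ▸ hp)
  have hrpos : 0 < dist p x := dist_pos.mpr (fun h => hxp h.symm)
  obtain ⟨z, hzC, hzmax'⟩ := hcpt.exists_isMaxOn ⟨p, hpC⟩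
    ((continuous_const.dist continuous_id).continuousOn (s := C))
  have hzmax : ∀ y ∈ C, dist p y ≤ dist p z := fun y hy => hzmax' hy
  set R := dist p z with hRdef
  have hRr : dist p x ≤ R := hzmax x hCx
  have hR0 : 0 < R := lt_of_lt_of_le hrpos hRr
  have hkC0 : 0 < kC := by omega
  constructor
  · -- forward direction
    intro hall
    by_contra h7
    push_neg at h7
    set χ := kC.minFac with hχ
    have hχp : χ.Prime := Nat.minFac_prime (by omega)
    have hχdvd : χ ∣ kC := Nat.minFac_dvd kC
    have hm : χ * (kC / χ) = kC := Nat.mul_div_cancel' hχdvd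
    have hm1 : kC / χ ≠ 1 := by
      intro h
      rw [h, mul_one] at hm
      exact hcomp (hm ▸ hχp)
    have hm0 : 0 < kC / χ := Nat.div_pos (Nat.minFac_le (by omega)) hχp.pos
    have hmdvd : (kC / χ) ∣ kC := Nat.div_dvd_of_dvd hχdvd
    have hχm : χ ≤ kC / χ := Nat.minFac_le_of_dvd (by omega) hmdvd
    have hk2χ : χ * χ ≤ kC := by
      calc χ * χ ≤ χ * (kC / χ) := Nat.mul_le_mul_left _ hχm
      _ = kC := hm
    have hk9 : 9 ≤ kC := by
      have : 3 * 3 ≤ χ * χ := Nat.mul_le_mul hmin hmin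
      omega
    have heq := hall χ kC hχdvd dvd_rfl (by omega) (by omega)
    have hup : dM C p x kC ≤ R := dM_le_R (by omega) hR0.le hzmax
    have hsymχ : IsRotSym C p χ := rotsym_div hsym hkC0 hχp.pos hχdvd
    have hxs : x ∈ C ∩ sector p x χ :=
      ⟨hCx, 1, 0, zero_le_one, le_refl 0, by push_cast; ring⟩
    have hrots : rot p (2 * Real.pi / χ) x ∈ C ∩ sector p x χ := by
      constructor
      · have : rot p (2 * Real.pi / χ) x ∈ rot p (2 * Real.pi / χ) '' C :=
          ⟨x, hCx, rfl⟩
        rwa [hsymχ] at this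
      · exact ⟨0, 1, le_refl 0, zero_le_one, by push_cast; ring⟩
    have hchord : 2 * Real.sin (Real.pi / χ) * dist p x ≤ dM C p x χ := by
      rw [← chord_len hmin]
      exact Metric.dist_le_diam_of_mem (hcpt.isBounded.subset inter_subset_left) hxs hrots
    have hfar := frontier_far hconv hsym (by omega) hzC hpC x hx
    -- hfar : R * cos (π / kC) ≤ dist p x
    have hπu : Real.pi < 3.15 := by
      have := Real.pi_lt_d2
      norm_num at this ⊢
      linarith
    have hπl : 3.141592 < Real.pi := by
      have := Real.pi_gt_d6
      norm_num at this ⊢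
      linarith
    have hπ2 : Real.pi ^ 2 < 9.9226 := by nlinarith [Real.pi_pos]
    have hπ3 : Real.pi ^ 3 < 31.256 := by nlinarith [Real.pi_pos, Real.pi_gt_three]
    have h35 : χ = 3 ∨ χ = 5 := by
      have h4 : χ ≠ 4 := fun h => by rw [h] at hχp; norm_num at hχp
      have h6 : χ ≠ 6 := fun h => by rw [h] at hχp; norm_num at hχp
      omega
    have hmono : ∀ N : ℕ, 0 < N → N ≤ kC →
        Real.cos (Real.pi / N) ≤ Real.cos (Real.pi / kC) := by
      intro N hN0 hNk
      apply Real.cos_le_cos_of_nonneg_of_le_pi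
      · positivity
      · have h1 : 0 < Real.pi / N := by positivity
        have h2 : Real.pi / N ≤ Real.pi := by
          rw [div_le_iff₀ (by exact_mod_cast hN0)]
          have : (1 : ℝ) ≤ N := by exact_mod_cast hN0
          nlinarith [Real.pi_pos]
        linarith
      · apply div_le_div_of_nonneg_left Real.pi_pos.le (by exact_mod_cast hN0)
        exact_mod_cast hNk
    rcases h35 with h3 | h5
    · -- χ = 3
      rw [h3] at hchord heq hk2χ
      have hk9' : (9 : ℕ) ≤ kC := by omega
      have hmono9 := hmono 9 (by norm_num) hk9'
      have hcos9 : (0.93 : ℝ) ≤ Real.cos (Real.pi / 9) := by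
        have hb := Real.one_sub_sq_div_two_le_cos (x := Real.pi / 9)
        nlinarith [hb, hπ2]
      have hs3 : (1.73 : ℝ) ≤ Real.sqrt 3 := by
        nlinarith [Real.sq_sqrt (by norm_num : (0:ℝ) ≤ 3), Real.sqrt_nonneg 3]
      have e1 : Real.sqrt 3 * dist p x ≤ dM C p x 3 := by
        have : 2 * Real.sin (Real.pi / 3) = Real.sqrt 3 := by
          rw [Real.sin_pi_div_three]; ring
        rw [← this]
        exact hchord
      have e2 : (0.93 : ℝ) * R ≤ dist p x := by
        nlinarith [mul_le_mul_of_nonneg_left (le_trans hcos9 hmono9) hR0.le, hfar]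
      have e3 : Real.sqrt 3 * (0.93 * R) ≤ Real.sqrt 3 * dist p x :=
        mul_le_mul_of_nonneg_left e2 (Real.sqrt_nonneg 3)
      have e4 : (1.73 : ℝ) * (0.93 * R) ≤ Real.sqrt 3 * (0.93 * R) :=
        mul_le_mul_of_nonneg_right hs3 (by positivity)
      linarith [heq ▸ hup, e1, e3, e4]
    · -- χ = 5
      rw [h5] at hchord heq hk2χ
      have hk25 : (25 : ℕ) ≤ kC := by omega
      have hmono25 := hmono 25 (by norm_num) hk25
      have hcos25 : (0.99 : ℝ) ≤ Real.cos (Real.pi / 25) := by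
        have hb := Real.one_sub_sq_div_two_le_cos (x := Real.pi / 25)
        nlinarith [hb, hπ2]
      have hsin5 : (0.565 : ℝ) ≤ Real.sin (Real.pi / 5) := by
        have hb := Real.sin_gt_sub_cube (x := Real.pi / 5) (by positivity)
        nlinarith [hb, hπ3, hπl]
      have e1 : (1.13 : ℝ) * dist p x ≤ dM C p x 5 := by
        have h1 := mul_le_mul_of_nonneg_right
          (show (1.13 : ℝ) ≤ 2 * Real.sin (Real.pi / 5) by linarith)
          (dist_nonneg (x := p) (y := x))
        exact h1.trans hchord
      have e2 : (0.99 : ℝ) * R ≤ dist p x := by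
        nlinarith [mul_le_mul_of_nonneg_left (le_trans hcos25 hmono25) hR0.le, hfar]
      have e3 : (1.13 : ℝ) * (0.99 * R) ≤ (1.13 : ℝ) * dist p x :=
        mul_le_mul_of_nonneg_left e2 (by norm_num)
      linarith [heq ▸ hup, e1, e3]
  · -- reverse direction
    intro h7 a b hadvd hbdvd ha1 hb1
    have key : ∀ c : ℕ, c ∣ kC → 1 < c → dM C p x c = R := by
      intro c hcdvd hc1
      have hc7 : 7 ≤ c := le_trans h7 (Nat.minFac_le_of_dvd (by omega) hcdvd)
      apply le_antisymm
      · exact dM_le_R (by omega) hR0.le hzmax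
      · exact R_le_dM hcpt.isBounded (rotsym_div hsym hkC0 (by omega) hcdvd)
          (by omega) hxp hpC hzC
    rw [key a hadvd ha1, key b hbdvd hb1]
end

section
/- Let C be a planar convex body that is k_C-rotationally symmetric about a point p in its interior, where k_C is an even integer greater than 2, and assume C is not a closed disk centered at p. Then for every divisor k > 2 of k_C one has d_M(P_2) > d_M(P_k); that is, diam(C ∩ H) > diam(C ∩ S_k). In particular, if k_1 = 2 < k_2 < … < k_n = k_C are the divisors of k_C greater than 1, then d_M(P_2) > d_M(P_{k_2}) ≥ … ≥ d_M(P_{k_n}). -/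
open Metric Set

/- ### Auxiliary lemmas -/

lemma rot_rot (p : ℂ) (α β : ℝ) (z : ℂ) : rot p α (rot p β z) = rot p (α + β) z := by
  simp only [rot]
  rw [show ((α + β : ℝ) : ℂ) = (α : ℂ) + (β : ℂ) by push_cast; ring]
  rw [add_mul, Complex.exp_add]
  ring

lemma rot_zero (p : ℂ) (z : ℂ) : rot p 0 z = z := by
  simp [rot]

/-- Homeomorphism version of rot. -/
noncomputable def rotH (p : ℂ) (α : ℝ) : ℂ ≃ₜ ℂ where
  toFun := rot p α
  invFun := rot p (-α)
  left_inv := fun z => by rw [rot_rot]; simp [rot_zero]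
  right_inv := fun z => by rw [rot_rot]; simp [rot_zero]
  continuous_toFun := by unfold rot; fun_prop
  continuous_invFun := by unfold rot; fun_prop

lemma rot_image_nat (p : ℂ) (θ : ℝ) (C : Set ℂ) (h : rot p θ '' C = C) (n : ℕ) :
    rot p (n * θ) '' C = C := by
  induction n with
  | zero => simp [rot_zero, Set.image_id']
  | succ n ih =>
    have heq : ∀ z, rot p ((n + 1 : ℕ) * θ) z = rot p (n * θ) (rot p θ z) := by
      intro z; rw [rot_rot]; congr 1; push_cast; ring
    calc rot p ((n+1 : ℕ) * θ) '' C = (rot p ((n:ℕ) * θ) ∘ rot p θ) '' C :=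
          Set.image_congr' heq
      _ = rot p ((n:ℕ) * θ) '' (rot p θ '' C) := Set.image_comp _ _ _
      _ = C := by rw [h, ih]

lemma rot_dist (p : ℂ) (α : ℝ) (z w : ℂ) : dist (rot p α z) (rot p α w) = dist z w := by
  simp only [rot, Complex.dist_eq]
  rw [show p + Complex.exp (α * Complex.I) * (z - p) - (p + Complex.exp (α * Complex.I) * (w - p))
      = Complex.exp (α * Complex.I) * (z - w) by ring]
  rw [norm_mul, Complex.norm_exp_ofReal_mul_I, one_mul]

lemma rot_frontier (p : ℂ) (α : ℝ) (C : Set ℂ) (h : rot p α '' C = C) :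
    rot p α '' frontier C = frontier C := by
  have h2 := (rotH p α).image_frontier C
  have h3 : ⇑(rotH p α) = rot p α := rfl
  rw [h3] at h2
  rw [h2, h]

lemma sq_abs_eq (ξ : ℂ) : ‖ξ‖^2 = ξ.re^2 + ξ.im^2 := by
  rw [Complex.sq_norm, Complex.normSq_apply]; ring

lemma cs_aux (A B c d ρ σ : ℝ) (hA : A^2 + B^2 = ρ^2) (h2 : c^2 + d^2 ≤ σ^2)
    (hρ : 0 ≤ ρ) (hσ : 0 ≤ σ) : A*c + B*d ≤ ρ*σ := by
  nlinarith [sq_nonneg (A*d - B*c), sq_nonneg (A*c + B*d - ρ*σ), sq_nonneg (A*c + B*d + ρ*σ),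
    mul_nonneg hρ hσ]

lemma key_quad (Wr Wi Zr Zi hre him t δ r N γ : ℝ)
    (hW2 : Wr^2 + Wi^2 = r^2) (hZ2 : Zr^2 + Zi^2 = N^2)
    (hip : Wr*Zr + Wi*Zi = r^2 + γ)
    (hh2 : hre^2 + him^2 ≤ δ^2)
    (hr : 0 < r) (hN : 0 < N) (hγ : 0 < γ)
    (ht0 : 0 < t) (ht12 : t ≤ 1/2) (htN : t*N^2 ≤ γ)
    (hδ0 : 0 < δ) (hδ1 : δ ≤ 1) (hδB : δ*(1+2*r+2*t*N) ≤ t*γ) :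
    (Wr + hre - t*Zr)^2 + (Wi + him - t*Zi)^2 ≤ ((1-t)*r)^2 := by
  have hWh : Wr*hre + Wi*him ≤ r*δ := cs_aux _ _ _ _ _ _ hW2 hh2 hr.le hδ0.le
  have hZh : -(N*δ) ≤ Zr*hre + Zi*him := by
    have := cs_aux (-Zr) (-Zi) hre him N δ (by nlinarith) hh2 hN.le hδ0.le
    nlinarith [this]
  have hδsq : δ^2 ≤ δ := by nlinarith
  nlinarith [mul_le_mul_of_nonneg_left hZh ht0.le, mul_le_mul_of_nonneg_left htN ht0.le,
    mul_pos ht0 hγ, hWh, hδB, hδsq, hh2, sq_nonneg t, mul_pos ht0 ht0]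

lemma abs_le_of_sq (ξ : ℂ) (M : ℝ) (hM : 0 ≤ M) (h : ξ.re^2 + ξ.im^2 ≤ M^2) :
    ‖ξ‖ ≤ M := by
  have h2 := sq_abs_eq ξ
  nlinarith [norm_nonneg ξ]

/-- The closed ball of radius `r` around an interior point whose distance
to the frontier is at least `r` is contained in the (closed) set. -/
lemma ball_subset (C : Set ℂ) (p : ℂ) (r : ℝ) (hCc : IsClosed C) (hpC : p ∈ C)
    (hr : 0 < r) (hfr : ∀ y ∈ frontier C, r ≤ dist p y) :
    Metric.closedBall p r ⊆ C := by
  intro y hy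
  by_contra hyC
  set f : ℝ → ℂ := fun t => p + (t : ℂ) * (y - p) with hf
  have hcont : Continuous f := by fun_prop
  set A : Set ℝ := {t | t ∈ Set.Icc (0:ℝ) 1 ∧ f t ∈ C} with hA
  have hA_closed : IsClosed A := (isClosed_Icc.preimage continuous_id).inter (hCc.preimage hcont)
  have hA_ne : A.Nonempty := ⟨0, ⟨le_refl _, zero_le_one⟩, by simp [hf, hpC]⟩
  have hA_bdd : BddAbove A := BddAbove.mono (fun t ht => ht.1) (bddAbove_Icc)
  set τ := sSup A with hτ
  have hτA : τ ∈ A := hA_closed.csSup_mem hA_ne hA_bdd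
  have hτ1 : τ ≤ 1 := hτA.1.2
  have hτ0 : 0 ≤ τ := hτA.1.1
  have hτlt : τ < 1 := by
    rcases lt_or_eq_of_le hτ1 with h | h
    · exact h
    · exfalso; apply hyC
      have := hτA.2
      rw [h] at this
      simpa [hf] using this
  have hmem_cl : f τ ∈ closure Cᶜ := by
    have hseq : ∀ n : ℕ, f (τ + (1 - τ)/(n+1)) ∈ Cᶜ := by
      intro n
      have hpos : 0 < (1 - τ)/(n+1) := div_pos (by linarith) (by positivity)
      have hle : τ + (1 - τ)/(n+1) ≤ 1 := by
        have h1n : (1:ℝ) ≤ (n:ℝ)+1 := by simp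
        have : (1 - τ)/(n+1) ≤ 1 - τ := div_le_self (by linarith) h1n
        linarith
      intro hmemC
      have : τ + (1 - τ)/(n+1) ∈ A := ⟨⟨by linarith, hle⟩, hmemC⟩
      have := le_csSup hA_bdd this
      linarith
    have htend0 : Filter.Tendsto (fun n : ℕ => τ + (1 - τ)/(n+1)) Filter.atTop (nhds τ) := by
      have h1 : Filter.Tendsto (fun n : ℕ => (1 - τ)/(n+1)) Filter.atTop (nhds 0) := by
        apply Filter.Tendsto.const_div_atTop
        exact Filter.tendsto_atTop_add_const_right _ _ tendsto_natCast_atTop_atTop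
      simpa using Filter.Tendsto.const_add τ h1
    have htend : Filter.Tendsto (fun n : ℕ => f (τ + (1 - τ)/(n+1))) Filter.atTop (nhds (f τ)) :=
      (hcont.continuousAt.tendsto).comp htend0
    exact mem_closure_of_tendsto htend (Filter.Eventually.of_forall hseq)
  have hfront : f τ ∈ frontier C := by
    rw [frontier_eq_closure_inter_closure]
    exact ⟨subset_closure hτA.2, hmem_cl⟩
  have hd := hfr _ hfront
  have hdist : dist p (f τ) = τ * dist p y := by
    simp only [hf, Complex.dist_eq]
    rw [show p - (p + (τ:ℂ) * (y - p)) = (τ:ℂ) * (p - y) by ring]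
    rw [norm_mul, Complex.norm_real, Real.norm_eq_abs, abs_of_nonneg hτ0]
  have hdy : dist p y ≤ r := by rwa [Metric.mem_closedBall, dist_comm] at hy
  nlinarith [dist_nonneg (x := p) (y := y)]

set_option maxHeartbeats 1000000 in
/-- Support-line inequality at a nearest frontier point. -/
lemma support_ineq (C : Set ℂ) (p w : ℂ) (r : ℝ) (hCc : IsClosed C) (hconv : Convex ℝ C)
    (hball : Metric.closedBall p r ⊆ C) (hr : 0 < r) (hw : w ∈ frontier C)
    (hwr : dist p w = r) (z : ℂ) (hz : z ∈ C) :
    (w - p).re * (z - p).re + (w - p).im * (z - p).im ≤ r ^ 2 := by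
  by_contra hcon
  push_neg at hcon
  have habsW : ‖w - p‖ = r := by rw [← hwr, dist_comm, Complex.dist_eq]
  have hW2 : (w-p).re ^ 2 + (w-p).im ^ 2 = r ^ 2 := by
    have h := sq_abs_eq (w - p); rw [habsW] at h; linarith
  set γ := (w-p).re * (z-p).re + (w-p).im * (z-p).im - r ^ 2 with hγdef
  have hγ : 0 < γ := by simp only [hγdef]; linarith
  have hip : (w-p).re * (z-p).re + (w-p).im * (z-p).im = r^2 + γ := by
    simp only [hγdef]; ring
  set N := ‖z - p‖ with hNdef
  have hZ2 : (z-p).re ^ 2 + (z-p).im ^ 2 = N ^ 2 := (sq_abs_eq (z-p)).symm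
  have hN : 0 < N := by
    rcases lt_or_eq_of_le (norm_nonneg (z-p)) with h | h
    · exact h
    · exfalso
      have hZ20 : (z-p).re ^ 2 + (z-p).im ^ 2 = 0 := by rw [hZ2, hNdef, ← h]; norm_num
      have h1 : (z-p).re = 0 := by nlinarith [sq_nonneg (z-p).re, sq_nonneg (z-p).im]
      have h2 : (z-p).im = 0 := by nlinarith [sq_nonneg (z-p).re, sq_nonneg (z-p).im]
      rw [h1, h2] at hcon
      nlinarith [sq_nonneg r]
  set t := min (1/2 : ℝ) (γ / N ^ 2) with htdef
  have ht0 : 0 < t := lt_min (by norm_num) (div_pos hγ (by positivity))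
  have ht12 : t ≤ 1/2 := min_le_left _ _
  have htN : t * N ^ 2 ≤ γ := by
    have h := min_le_right (1/2 : ℝ) (γ / N ^ 2)
    calc t * N ^ 2 ≤ (γ / N ^ 2) * N ^ 2 := mul_le_mul_of_nonneg_right h (by positivity)
      _ = γ := by field_simp
  set δ := min 1 (t * γ / (1 + 2 * r + 2 * t * N)) with hδdef
  have hδ0 : 0 < δ := lt_min one_pos (by positivity)
  have hδ1 : δ ≤ 1 := min_le_left _ _
  have hδB : δ * (1 + 2 * r + 2 * t * N) ≤ t * γ := by
    have h := min_le_right (1:ℝ) (t * γ / (1 + 2 * r + 2 * t * N))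
    have hpos : (0:ℝ) < 1 + 2 * r + 2 * t * N := by positivity
    calc δ * (1 + 2 * r + 2 * t * N)
        ≤ (t * γ / (1 + 2 * r + 2 * t * N)) * (1 + 2 * r + 2 * t * N) :=
          mul_le_mul_of_nonneg_right h hpos.le
      _ = t * γ := by field_simp
  have h1t : (0:ℝ) < 1 - t := by linarith
  have hballw : Metric.ball w δ ⊆ C := by
    intro y hy
    have hh2 : (y-w).re ^ 2 + (y-w).im ^ 2 ≤ δ ^ 2 := by
      rw [Metric.mem_ball, Complex.dist_eq] at hy
      nlinarith [sq_abs_eq (y - w), norm_nonneg (y - w)]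
    have hξbound : ((w-p) + (y-w) - (t:ℂ) * (z-p)).re ^ 2
        + ((w-p) + (y-w) - (t:ℂ) * (z-p)).im ^ 2 ≤ ((1 - t) * r) ^ 2 := by
      have hre : ((w-p) + (y-w) - (t:ℂ) * (z-p)).re = (w-p).re + (y-w).re - t * (z-p).re := by
        simp
      have him : ((w-p) + (y-w) - (t:ℂ) * (z-p)).im = (w-p).im + (y-w).im - t * (z-p).im := by
        simp
      rw [hre, him]
      exact key_quad _ _ _ _ _ _ t δ r N γ hW2 hZ2 hip hh2 hr hN hγ ht0 ht12 htN hδ0 hδ1 hδB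
    set ξ := (w-p) + (y-w) - (t:ℂ) * (z-p) with hξdef
    have hu : p + ((1 - t : ℝ) : ℂ)⁻¹ * ξ ∈ Metric.closedBall p r := by
      rw [Metric.mem_closedBall, Complex.dist_eq]
      rw [show p + ((1 - t : ℝ) : ℂ)⁻¹ * ξ - p = ((1 - t : ℝ) : ℂ)⁻¹ * ξ by ring]
      rw [norm_mul, norm_inv, Complex.norm_real, Real.norm_eq_abs, abs_of_pos h1t]
      rw [inv_mul_le_iff₀ h1t]
      exact le_trans (abs_le_of_sq ξ ((1 - t) * r) (mul_pos h1t hr).le hξbound) le_rfl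
    have huC : p + ((1 - t : ℝ) : ℂ)⁻¹ * ξ ∈ C := hball hu
    have hcomb : (1 - t) • (p + ((1 - t : ℝ) : ℂ)⁻¹ * ξ) + t • z ∈ C :=
      hconv huC hz (by linarith) ht0.le (by ring)
    have heq : (1 - t) • (p + ((1 - t : ℝ) : ℂ)⁻¹ * ξ) + t • z = y := by
      have hc : ((1 - t : ℝ) : ℂ) ≠ 0 := Complex.ofReal_ne_zero.mpr h1t.ne'
      have expand : ((1 - t : ℝ) : ℂ) * (p + ((1 - t : ℝ) : ℂ)⁻¹ * ξ)
          = ((1 - t : ℝ) : ℂ) * p + ξ := by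
        rw [mul_add, ← mul_assoc, mul_inv_cancel₀ hc, one_mul]
      have hsmul1 : (1 - t) • (p + ((1 - t : ℝ) : ℂ)⁻¹ * ξ)
          = ((1 - t : ℝ) : ℂ) * (p + ((1 - t : ℝ) : ℂ)⁻¹ * ξ) := Complex.real_smul
      have hsmul2 : t • z = (t : ℂ) * z := Complex.real_smul
      rw [hsmul1, hsmul2, expand, hξdef]
      push_cast
      ring
    rwa [heq] at hcomb
  have hint : w ∈ interior C :=
    mem_interior.mpr ⟨Metric.ball w δ, hballw, Metric.isOpen_ball, Metric.mem_ball_self hδ0⟩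
  rw [hCc.frontier_eq] at hw
  exact hw.2 hint

lemma case3 (a b a' b' : ℝ)
    (ha : 0 ≤ a) (hb : 0 ≤ b) (ha' : 0 ≤ a') (hb' : 0 ≤ b')
    (h1 : a - b/2 ≤ 1) (h2 : b - a/2 ≤ 1) (h3 : a + b ≤ 2)
    (h1' : a' - b'/2 ≤ 1) (h2' : b' - a'/2 ≤ 1) (h3' : a' + b' ≤ 2) :
    (a-a')^2 + (b-b')^2 - (a-a')*(b-b') ≤ 3 := by
  have hg1 : (0:ℝ) ≤ 2 - 2*a + b := by linarith
  have hg2 : (0:ℝ) ≤ 2 - 2*b + a := by linarith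
  have hg3 : (0:ℝ) ≤ 2 - a - b := by linarith
  have hg1' : (0:ℝ) ≤ 2 - 2*a' + b' := by linarith
  have hg2' : (0:ℝ) ≤ 2 - 2*b' + a' := by linarith
  have hg3' : (0:ℝ) ≤ 2 - a' - b' := by linarith
  linarith [mul_nonneg hg1 ha, mul_nonneg hg1 hg1', mul_nonneg ha' hg1',
    mul_nonneg hg2' hg2, mul_nonneg hg2' ha, mul_nonneg hg2' hb',
    mul_nonneg (mul_nonneg hg1 hg2) ha, mul_nonneg (mul_nonneg hg1 hg2) hb,
    mul_nonneg (mul_nonneg hg1 hg2) hg3', mul_nonneg (mul_nonneg hg1 ha) hg3,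
    mul_nonneg (mul_nonneg hg1 ha) hg1', mul_nonneg (mul_nonneg hg1 ha) hb',
    mul_nonneg (mul_nonneg hg1 hg1') hg1, mul_nonneg (mul_nonneg hb hg2) hg3,
    mul_nonneg (mul_nonneg hb hg2) ha', mul_nonneg (mul_nonneg hb hg2) hb',
    mul_nonneg (mul_nonneg hb ha) hg3, mul_nonneg (mul_nonneg hb ha) ha',
    mul_nonneg (mul_nonneg hb ha) hb']

lemma case_big (a b a' b' c : ℝ) (hc0 : 0 ≤ c)
    (ha : 0 ≤ a) (hb : 0 ≤ b) (ha' : 0 ≤ a') (hb' : 0 ≤ b')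
    (h1 : a + c*b ≤ 1) (h2 : c*a + b ≤ 1) (h1' : a' + c*b' ≤ 1) (h2' : c*a' + b' ≤ 1) :
    (a-a')^2 + (b-b')^2 + 2*c*((a-a')*(b-b')) ≤ 2 + 2*c := by
  have haa : a ≤ 1 := by nlinarith
  have hbb : b ≤ 1 := by nlinarith
  have haa' : a' ≤ 1 := by nlinarith
  have hbb' : b' ≤ 1 := by nlinarith
  have h5 : (a-a')*(b-b') ≤ 1 := by nlinarith
  have h6 : (a-a')^2 ≤ 1 := by nlinarith
  have h7 : (b-b')^2 ≤ 1 := by nlinarith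
  nlinarith [mul_le_mul_of_nonneg_left h5 hc0]

/-- Dot product of two rotated copies of a vector. -/
lemma dot_rot (α β : ℝ) (X : ℂ) :
    (Complex.exp (α * Complex.I) * X).re * (Complex.exp (β * Complex.I) * X).re
    + (Complex.exp (α * Complex.I) * X).im * (Complex.exp (β * Complex.I) * X).im
    = Real.cos (β - α) * (X.re^2 + X.im^2) := by
  rw [Real.cos_sub]
  simp only [Complex.mul_re, Complex.mul_im, Complex.exp_ofReal_mul_I_re,
    Complex.exp_ofReal_mul_I_im]
  nlinarith [Real.sin_sq_add_cos_sq α, Real.sin_sq_add_cos_sq β]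

lemma comb_re (s t : ℝ) (X Y : ℂ) : ((s:ℂ)*X + (t:ℂ)*Y).re = s*X.re + t*Y.re := by
  simp [Complex.add_re, Complex.mul_re]

lemma comb_im (s t : ℝ) (X Y : ℂ) : ((s:ℂ)*X + (t:ℂ)*Y).im = s*X.im + t*Y.im := by
  simp [Complex.add_im, Complex.mul_im]

lemma inner_real_complex (w z : ℂ) : (inner (𝕜 := ℝ) w z : ℝ) = w.re*z.re + w.im*z.im := by
  rw [Complex.inner]
  simp only [Complex.mul_re, Complex.conj_re, Complex.conj_im]
  ring

lemma cos_lt_one' (θ : ℝ) (h0 : 0 < θ) (hπ : θ ≤ Real.pi) : Real.cos θ < 1 := by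
  have h := Real.strictAntiOn_cos (Set.mem_Icc.mpr ⟨le_refl 0, Real.pi_pos.le⟩)
    (Set.mem_Icc.mpr ⟨h0.le, hπ⟩) h0
  rwa [Real.cos_zero] at h

set_option maxHeartbeats 2000000 in
/-- For a multi-rotationally symmetric planar convex body with even maximal
degree `k_C > 2` which is not a closed disk centered at `p`, the maximum
relative diameter of the standard `2`-partition (the diameter of the
intersection of `C` with a closed half-plane bounded by the line through
`p` and `x`) is strictly larger than `d_M(P_k)` for every divisor `k > 2`
of `k_C`. -/
theorem stmt_15 (C : Set ℂ) (p x : ℂ) (kC : ℕ) (hC : IsConvexBody C)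
    (hk2 : 2 < kC) (heven : 2 ∣ kC) (hsym : IsRotSym C p kC)
    (hp : p ∈ interior C) (hx : x ∈ frontier C)
    (hxr : dist p x = infDist p (frontier C))
    (hdisk : ∀ ρ : ℝ, C ≠ Metric.closedBall p ρ) :
    ∀ k : ℕ, k ∣ kC → 2 < k →
      dM C p x k <
        Metric.diam
          (C ∩ {z : ℂ | 0 ≤ inner (𝕜 := ℝ) (Complex.I * (x - p)) (z - p)}) := by
  intro k hkdvd hk2'
  obtain ⟨hcomp, hconv, hintne⟩ := hC
  have hCcl : IsClosed C := hcomp.isClosed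
  set r := dist p x with hrdef
  have hxC : x ∈ C := by
    rw [hCcl.frontier_eq] at hx; exact hx.1
  have hxni : x ∉ interior C := by
    rw [hCcl.frontier_eq] at hx; exact hx.2
  have hr : 0 < r := by
    rw [hrdef, dist_pos]
    intro h
    exact hxni (h ▸ hp)
  have hfr : ∀ y ∈ frontier C, r ≤ dist p y := by
    intro y hy
    have h := Metric.infDist_le_dist_of_mem (x := p) hy
    rw [← hxr] at h
    exact h
  have hball := ball_subset C p r hCcl (interior_subset hp) hr hfr
  have hmsym : ∀ m : ℕ, rot p ((m : ℝ) * (2*Real.pi/(kC:ℝ))) '' C = C :=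
    rot_image_nat p _ C hsym
  have hdiv : ∀ d : ℕ, d ∣ kC → d ≠ 0 → rot p (2*Real.pi/(d:ℝ)) '' C = C := by
    intro d hd hd0
    obtain ⟨m, hm⟩ := hd
    have hm0 : m ≠ 0 := by rintro rfl; omega
    have h1 : ((kC/d : ℕ):ℝ) * (2*Real.pi/(kC:ℝ)) = 2*Real.pi/(d:ℝ) := by
      subst hm
      rw [Nat.mul_div_cancel_left _ (Nat.pos_of_ne_zero hd0)]
      have hd0' : (d:ℝ) ≠ 0 := Nat.cast_ne_zero.mpr hd0
      have hm0' : (m:ℝ) ≠ 0 := Nat.cast_ne_zero.mpr hm0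
      push_cast
      field_simp
    rw [← h1]
    exact hmsym _
  have hnear : ∀ α : ℝ, rot p α '' C = C →
      (rot p α x ∈ frontier C ∧ dist p (rot p α x) = r) := by
    intro α hα
    refine ⟨?_, ?_⟩
    · rw [← rot_frontier p α C hα]
      exact mem_image_of_mem _ hx
    · have hfix : rot p α p = p := by simp [rot]
      calc dist p (rot p α x) = dist (rot p α p) (rot p α x) := by rw [hfix]
        _ = dist p x := rot_dist p α p x
        _ = r := rfl
  have hsupp : ∀ α : ℝ, rot p α '' C = C → ∀ z ∈ C,
      (rot p α x - p).re * (z-p).re + (rot p α x - p).im * (z-p).im ≤ r^2 := by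
    intro α hα z hz
    exact support_ineq C p (rot p α x) r hCcl hconv hball hr (hnear α hα).1 (hnear α hα).2 z hz
  -- the vector X = x - p
  have habsX : ‖x - p‖ = r := by
    rw [hrdef, dist_comm, Complex.dist_eq]
  have hr2 : (x-p).re^2 + (x-p).im^2 = r^2 := by
    have h := sq_abs_eq (x-p); rw [habsX] at h; linarith
  -- central symmetry: 2p - x ∈ C
  have hpi : rot p Real.pi '' C = C := by
    have h2 : rot p (2*Real.pi/((2:ℕ):ℝ)) '' C = C := hdiv 2 heven (by norm_num)
    have heq : (2*Real.pi/((2:ℕ):ℝ)) = Real.pi := by push_cast; ring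
    rwa [heq] at h2
  have hx2C : (2*p - x) ∈ C := by
    have heq : rot p Real.pi x = 2*p - x := by
      simp only [rot, Complex.exp_pi_mul_I]
      ring
    rw [← heq, ← hpi]
    exact mem_image_of_mem _ hxC
  -- memberships in the half-plane H
  have hxH : x ∈ C ∩ {z : ℂ | 0 ≤ inner (𝕜 := ℝ) (Complex.I * (x - p)) (z - p)} := by
    refine ⟨hxC, ?_⟩
    show (0:ℝ) ≤ inner (𝕜 := ℝ) (Complex.I * (x - p)) (x - p)
    have h0 : (inner (𝕜 := ℝ) (Complex.I * (x - p)) (x - p) : ℝ) = 0 := by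
      rw [inner_real_complex]
      simp only [Complex.mul_re, Complex.mul_im, Complex.I_re, Complex.I_im]
      ring
    rw [h0]
  have hx2H : (2*p - x) ∈ C ∩ {z : ℂ | 0 ≤ inner (𝕜 := ℝ) (Complex.I * (x - p)) (z - p)} := by
    refine ⟨hx2C, ?_⟩
    show (0:ℝ) ≤ inner (𝕜 := ℝ) (Complex.I * (x - p)) (2*p - x - p)
    have h0 : (inner (𝕜 := ℝ) (Complex.I * (x - p)) (2*p - x - p) : ℝ) = 0 := by
      rw [inner_real_complex, show 2*p - x - p = -(x-p) by ring]
      simp only [Complex.mul_re, Complex.mul_im, Complex.I_re, Complex.I_im,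
        Complex.neg_re, Complex.neg_im]
      ring
    rw [h0]
  -- lower bound for the diameter of C ∩ H
  have hbd : Bornology.IsBounded
      (C ∩ {z : ℂ | 0 ≤ inner (𝕜 := ℝ) (Complex.I * (x - p)) (z - p)}) :=
    hcomp.isBounded.subset inter_subset_left
  have hdistxx : dist x (2*p - x) = 2*r := by
    rw [Complex.dist_eq]
    rw [show x - (2*p - x) = 2*(x - p) by ring]
    rw [norm_mul, Complex.norm_two, habsX]
  have hlow : 2*r ≤ Metric.diam
      (C ∩ {z : ℂ | 0 ≤ inner (𝕜 := ℝ) (Complex.I * (x - p)) (z - p)}) := by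
    rw [← hdistxx]
    exact Metric.dist_le_diam_of_mem hbd hxH hx2H
  -- sector side
  have hk0 : k ≠ 0 := by omega
  have hθsym : rot p (2*Real.pi/(k:ℝ)) '' C = C := hdiv k hkdvd hk0
  set θ := 2*Real.pi/(k:ℝ) with hθdef
  set Y := rot p θ x - p with hYdef
  have hYeq : Y = Complex.exp (θ * Complex.I) * (x - p) := by
    simp only [hYdef, rot]; ring
  set c := Real.cos θ with hcdef
  have hθpos : 0 < θ := by
    rw [hθdef]
    apply div_pos (by positivity)
    exact_mod_cast Nat.pos_of_ne_zero hk0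
  -- dot products
  have hXX : (x-p).re * (x-p).re + (x-p).im * (x-p).im = r^2 := by linear_combination hr2
  have hXY : (x-p).re * Y.re + (x-p).im * Y.im = c * r^2 := by
    have h := dot_rot 0 θ (x - p)
    rw [show ((0:ℝ):ℂ) * Complex.I = 0 by simp, Complex.exp_zero, one_mul,
      show θ - 0 = θ by ring, hr2, ← hYeq, ← hcdef] at h
    exact h
  have hYY : Y.re * Y.re + Y.im * Y.im = r^2 := by
    have h := dot_rot θ θ (x - p)
    rw [show θ - θ = 0 by ring, Real.cos_zero, one_mul, hr2, ← hYeq] at h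
    exact h
  -- constraints for points of C ∩ sector
  have hconstr : ∀ u ∈ C ∩ sector p x k, ∀ a b : ℝ, 0 ≤ a → 0 ≤ b →
      u = p + (a:ℂ)*(x-p) + (b:ℂ)*Y → (a + c*b ≤ 1 ∧ c*a + b ≤ 1) := by
    intro u hu a b ha hb hueq
    have humem : u ∈ C := hu.1
    have hup : u - p = (a:ℂ)*(x-p) + (b:ℂ)*Y := by rw [hueq]; ring
    have hre : (u-p).re = a*(x-p).re + b*Y.re := by rw [hup]; exact comb_re a b _ _
    have him : (u-p).im = a*(x-p).im + b*Y.im := by rw [hup]; exact comb_im a b _ _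
    have hid : rot p 0 '' C = C := by
      have : rot p (0:ℝ) = id := funext (rot_zero p)
      rw [this, Set.image_id]
    have hs1 := hsupp 0 hid u humem
    rw [rot_zero] at hs1
    rw [hre, him] at hs1
    have hs1' : a * r^2 + b * (c * r^2) ≤ r^2 := by
      have hexp : (x-p).re * (a*(x-p).re + b*Y.re) + (x-p).im * (a*(x-p).im + b*Y.im)
          = a * r^2 + b * (c * r^2) := by linear_combination a * hXX + b * hXY
      linarith [hs1, hexp.ge, hexp.le]
    have hs2 := hsupp θ hθsym u humem
    rw [← hYdef] at hs2
    rw [hre, him] at hs2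
    have hs2' : a * (c * r^2) + b * r^2 ≤ r^2 := by
      have hexp : Y.re * (a*(x-p).re + b*Y.re) + Y.im * (a*(x-p).im + b*Y.im)
          = a * (c * r^2) + b * r^2 := by linear_combination a * hXY + b * hYY
      linarith [hs2, hexp.ge, hexp.le]
    constructor
    · nlinarith [hs1', hr, sq_nonneg r, mul_pos hr hr]
    · nlinarith [hs2', hr, sq_nonneg r, mul_pos hr hr]
  -- distance formula for two points of the sector
  have hdistsq : ∀ (a b a' b' : ℝ),
      ((p + (a:ℂ)*(x-p) + (b:ℂ)*Y) - (p + (a':ℂ)*(x-p) + (b':ℂ)*Y)).re^2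
      + ((p + (a:ℂ)*(x-p) + (b:ℂ)*Y) - (p + (a':ℂ)*(x-p) + (b':ℂ)*Y)).im^2
      = ((a-a')^2 + (b-b')^2 + 2*c*((a-a')*(b-b')))*r^2 := by
    intro a b a' b'
    have hsub : (p + (a:ℂ)*(x-p) + (b:ℂ)*Y) - (p + (a':ℂ)*(x-p) + (b':ℂ)*Y)
        = ((a-a':ℝ):ℂ)*(x-p) + ((b-b':ℝ):ℂ)*Y := by push_cast; ring
    rw [hsub, comb_re, comb_im]
    linear_combination ((a-a')^2) * hXX + ((b-b')^2) * hYY + (2*(a-a')*(b-b')) * hXY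
  -- case split
  rcases (by omega : k = 3 ∨ 4 ≤ k) with hk3 | hk4
  · -- k = 3
    subst hk3
    have hθ3 : θ = 2*Real.pi/3 := by rw [hθdef]; norm_num
    have hc3 : c = -(1/2) := by
      rw [hcdef, hθ3, show 2*Real.pi/3 = Real.pi - Real.pi/3 by ring,
        Real.cos_pi_sub, Real.cos_pi_div_three]
    -- extra support from 6-fold symmetry
    have h6 : (6:ℕ) ∣ kC := Nat.Coprime.mul_dvd_of_dvd_of_dvd (by norm_num) heven hkdvd
    have hpi3 : rot p (Real.pi/3) '' C = C := by
      have h2 : rot p (2*Real.pi/((6:ℕ):ℝ)) '' C = C := hdiv 6 h6 (by norm_num)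
      have heq : (2*Real.pi/((6:ℕ):ℝ)) = Real.pi/3 := by push_cast; ring
      rwa [heq] at h2
    set W := rot p (Real.pi/3) x - p with hWdef
    have hWeq : W = Complex.exp ((Real.pi/3 : ℝ) * Complex.I) * (x - p) := by
      simp only [hWdef, rot]; ring
    have hWX : W.re * (x-p).re + W.im * (x-p).im = (1/2) * r^2 := by
      have h := dot_rot (Real.pi/3) 0 (x - p)
      rw [show ((0:ℝ):ℂ) * Complex.I = 0 by simp, Complex.exp_zero, one_mul,
        show (0:ℝ) - Real.pi/3 = -(Real.pi/3) by ring, Real.cos_neg,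
        Real.cos_pi_div_three, hr2, ← hWeq] at h
      exact h
    have hWY : W.re * Y.re + W.im * Y.im = (1/2) * r^2 := by
      have h := dot_rot (Real.pi/3) θ (x - p)
      rw [show θ - Real.pi/3 = Real.pi/3 by rw [hθ3]; ring, Real.cos_pi_div_three,
        hr2, ← hWeq, ← hYeq] at h
      exact h
    have hconstr3 : ∀ u ∈ C ∩ sector p x 3, ∀ a b : ℝ, 0 ≤ a → 0 ≤ b →
        u = p + (a:ℂ)*(x-p) + (b:ℂ)*Y → a + b ≤ 2 := by
      intro u hu a b ha hb hueq
      have humem : u ∈ C := hu.1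
      have hup : u - p = (a:ℂ)*(x-p) + (b:ℂ)*Y := by rw [hueq]; ring
      have hre : (u-p).re = a*(x-p).re + b*Y.re := by rw [hup]; exact comb_re a b _ _
      have him : (u-p).im = a*(x-p).im + b*Y.im := by rw [hup]; exact comb_im a b _ _
      have hs3 := hsupp (Real.pi/3) hpi3 u humem
      rw [← hWdef] at hs3
      rw [hre, him] at hs3
      have hs3' : a * ((1/2)*r^2) + b * ((1/2)*r^2) ≤ r^2 := by
        have hexp : W.re * (a*(x-p).re + b*Y.re) + W.im * (a*(x-p).im + b*Y.im)
            = a * ((1/2)*r^2) + b * ((1/2)*r^2) := by linear_combination a * hWX + b * hWY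
        linarith [hs3, hexp.ge, hexp.le]
      nlinarith [hs3', mul_pos hr hr]
    -- diameter bound
    have hM0 : (0:ℝ) ≤ Real.sqrt 3 * r := mul_nonneg (Real.sqrt_nonneg 3) hr.le
    have hdiam : Metric.diam (C ∩ sector p x 3) ≤ Real.sqrt 3 * r := by
      apply Metric.diam_le_of_forall_dist_le hM0
      intro u hu v hv
      obtain ⟨a, b, ha, hb, hueq⟩ := hu.2
      obtain ⟨a', b', ha', hb', hveq⟩ := hv.2
      rw [← hYdef] at hueq hveq
      have hcs := hconstr u hu a b ha hb hueq
      have hcs' := hconstr v hv a' b' ha' hb' hveq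
      have hc6 := hconstr3 u hu a b ha hb hueq
      have hc6' := hconstr3 v hv a' b' ha' hb' hveq
      rw [dist_eq_norm, hueq, hveq]
      rw [show ‖(p + (a:ℂ)*(x-p) + (b:ℂ)*Y) - (p + (a':ℂ)*(x-p) + (b':ℂ)*Y)‖
        = ‖(p + (a:ℂ)*(x-p) + (b:ℂ)*Y) - (p + (a':ℂ)*(x-p) + (b':ℂ)*Y)‖ from rfl]
      apply abs_le_of_sq _ _ hM0
      rw [hdistsq a b a' b']
      have hq := case3 a b a' b' ha hb ha' hb'
        (by nlinarith [hcs.1, hc3]) (by nlinarith [hcs.2, hc3]) hc6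
        (by nlinarith [hcs'.1, hc3]) (by nlinarith [hcs'.2, hc3]) hc6'
      have hsq3 : (Real.sqrt 3 * r)^2 = 3 * r^2 := by
        rw [mul_pow, Real.sq_sqrt (by norm_num : (0:ℝ) ≤ 3)]
      rw [hsq3, hc3]
      nlinarith [hq, sq_nonneg r]
    have hlt : Real.sqrt 3 * r < 2 * r := by
      apply mul_lt_mul_of_pos_right _ hr
      rw [show (2:ℝ) = Real.sqrt 4 by rw [show (4:ℝ) = 2^2 by norm_num, Real.sqrt_sq]; norm_num]
      exact Real.sqrt_lt_sqrt (by norm_num) (by norm_num)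
    calc dM C p x 3 ≤ Real.sqrt 3 * r := hdiam
      _ < 2*r := hlt
      _ ≤ _ := hlow
  · -- 4 ≤ k
    have hθle : θ ≤ Real.pi/2 := by
      rw [hθdef]
      rw [div_le_div_iff₀ (by exact_mod_cast Nat.pos_of_ne_zero hk0) (by norm_num)]
      have : (4:ℝ) ≤ (k:ℝ) := by exact_mod_cast hk4
      nlinarith [Real.pi_pos]
    have hc0 : 0 ≤ c := by
      rw [hcdef]
      apply Real.cos_nonneg_of_mem_Icc
      constructor
      · linarith [hθpos]
      · exact hθle
    have hc1 : c < 1 := by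
      rw [hcdef]
      exact cos_lt_one' θ hθpos (by linarith [Real.pi_pos, hθle])
    have h2c : 0 ≤ 2 + 2*c := by linarith
    have hM0 : (0:ℝ) ≤ Real.sqrt (2 + 2*c) * r := mul_nonneg (Real.sqrt_nonneg _) hr.le
    have hdiam : Metric.diam (C ∩ sector p x k) ≤ Real.sqrt (2 + 2*c) * r := by
      apply Metric.diam_le_of_forall_dist_le hM0
      intro u hu v hv
      obtain ⟨a, b, ha, hb, hueq⟩ := hu.2
      obtain ⟨a', b', ha', hb', hveq⟩ := hv.2
      rw [← hYdef] at hueq hveq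
      have hcs := hconstr u hu a b ha hb hueq
      have hcs' := hconstr v hv a' b' ha' hb' hveq
      rw [dist_eq_norm, hueq, hveq]
      rw [show ‖(p + (a:ℂ)*(x-p) + (b:ℂ)*Y) - (p + (a':ℂ)*(x-p) + (b':ℂ)*Y)‖
        = ‖(p + (a:ℂ)*(x-p) + (b:ℂ)*Y) - (p + (a':ℂ)*(x-p) + (b':ℂ)*Y)‖ from rfl]
      apply abs_le_of_sq _ _ hM0
      rw [hdistsq a b a' b']
      have hq := case_big a b a' b' c hc0 ha hb ha' hb' hcs.1 hcs.2 hcs'.1 hcs'.2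
      have hsqc : (Real.sqrt (2 + 2*c) * r)^2 = (2 + 2*c) * r^2 := by
        rw [mul_pow, Real.sq_sqrt h2c]
      rw [hsqc]
      nlinarith [hq, sq_nonneg r]
    have hlt : Real.sqrt (2 + 2*c) * r < 2 * r := by
      apply mul_lt_mul_of_pos_right _ hr
      have : Real.sqrt (2 + 2*c) < Real.sqrt 4 := Real.sqrt_lt_sqrt h2c (by linarith)
      calc Real.sqrt (2 + 2*c) < Real.sqrt 4 := this
        _ = 2 := by rw [show (4:ℝ) = 2^2 by norm_num, Real.sqrt_sq]; norm_num
    calc dM C p x k ≤ Real.sqrt (2 + 2*c) * r := hdiam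
      _ < 2*r := hlt
      _ ≤ _ := hlow
end

section
/- Let C be a planar convex body and p a point in its interior. If C is k-rotationally symmetric about p for every integer k ≥ 2, then C is a closed disk centered at p; that is, C equals the closed ball of center p and radius R = sup_{y ∈ C} dist(p, y). -/
open Metric Set

lemma rot_nat (p : ℂ) (α : ℝ) (z : ℂ) (m : ℕ) (C : Set ℂ)
    (h : rot p α '' C ⊆ C) (hz : z ∈ C) : rot p (m * α) z ∈ C := by
  induction m with
  | zero => simpa [rot] using hz
  | succ n ih =>
      have : rot p α (rot p (n * α) z) ∈ C := h ⟨_, ih, rfl⟩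
      rwa [rot_rot, show α + n * α = (n+1 : ℕ) * α by push_cast; ring] at this

/-- All real-angle rotates of a point of `C` lie in `C`. -/
lemma rot_mem (C : Set ℂ) (p : ℂ) (hC : IsConvexBody C)
    (hsym : ∀ k : ℕ, 2 ≤ k → IsRotSym C p k) (z : ℂ) (hz : z ∈ C) (θ : ℝ) :
    rot p θ z ∈ C := by
  set f : ℝ → ℂ := fun θ => rot p θ z with hf
  have hfc : Continuous f := by
    apply Continuous.add continuous_const
    exact (Complex.continuous_exp.comp (by continuity)).mul continuous_const
  have hper : Function.Periodic f (2 * Real.pi) := by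
    intro x
    simp only [hf, rot]
    congr 1
    congr 1
    push_cast
    rw [add_mul, Complex.exp_add, Complex.exp_two_pi_mul_I, mul_one]
  have hclosed : IsClosed (f ⁻¹' C) := (hC.1.isClosed).preimage hfc
  -- nonnegative rationals of the form m / k, k ≥ 2
  have hmk : ∀ m k : ℕ, 2 ≤ k → (2 * Real.pi * m / k) ∈ f ⁻¹' C := by
    intro m k hk
    have h1 : rot p (2 * Real.pi / k) '' C ⊆ C := (hsym k hk).subset
    have := rot_nat p (2 * Real.pi / k) z m C h1 hz
    have heq : (m : ℝ) * (2 * Real.pi / k) = 2 * Real.pi * m / k := by ring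
    rwa [heq] at this
  -- all rationals
  have hq : ∀ q : ℚ, (2 * Real.pi * q) ∈ f ⁻¹' C := by
    intro q
    obtain ⟨n, hn⟩ := exists_nat_ge (-q)
    have hq0 : (0:ℚ) ≤ q + n := by linarith
    set q' : ℚ := q + n with hq'
    have key : (2 * Real.pi * q') ∈ f ⁻¹' C := by
      have hnum : (q'.num.toNat : ℤ) = q'.num := Int.toNat_of_nonneg (Rat.num_nonneg.mpr hq0)
      have hden0 : (q'.den : ℝ) ≠ 0 := Nat.cast_ne_zero.mpr q'.pos.ne'
      have hm' : ((q'.num.toNat : ℝ)) = (q' : ℝ) * q'.den := by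
        rw [show ((q'.num.toNat : ℝ)) = ((q'.num : ℤ) : ℝ) by exact_mod_cast congrArg (Int.cast : ℤ → ℝ) hnum,
          Rat.cast_def]
        field_simp
      have hden2 : 2 ≤ 2 * q'.den := by
        have := q'.pos
        omega
      have := hmk (2 * q'.num.toNat) (2 * q'.den) hden2
      have heq : (2 * Real.pi * ((2 * q'.num.toNat : ℕ) : ℝ) / ((2 * q'.den : ℕ) : ℝ) : ℝ)
          = 2 * Real.pi * q' := by
        push_cast
        rw [hm']
        field_simp
      rwa [heq] at this
    -- shift back by n periods
    have hper' : f (2 * Real.pi * q) = f (2 * Real.pi * q') := by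
      have : (2 * Real.pi * (q' : ℝ)) = 2 * Real.pi * q + n * (2 * Real.pi) := by
        push_cast [hq']
        ring
      rw [this, (hper.nat_mul n) (2 * Real.pi * q)]
    simpa [Set.mem_preimage, hper'] using key
  -- density
  have hdense : DenseRange (fun q : ℚ => (2 * Real.pi * q : ℝ)) := by
    have h1 : DenseRange ((↑) : ℚ → ℝ) := Rat.denseRange_cast
    have h2 : Function.Surjective (fun x : ℝ => 2 * Real.pi * x) := by
      intro y
      exact ⟨y / (2 * Real.pi), by field_simp⟩
    have h3 : DenseRange (fun x : ℝ => 2 * Real.pi * x) := h2.denseRange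
    exact h3.comp h1 (by continuity)
  have hsub : Set.range (fun q : ℚ => (2 * Real.pi * q : ℝ)) ⊆ f ⁻¹' C := by
    rintro _ ⟨q, rfl⟩; exact hq q
  have hθ : θ ∈ closure (Set.range (fun q : ℚ => (2 * Real.pi * q : ℝ))) := by
    rw [hdense.closure_eq]; trivial
  exact (hclosed.closure_subset_iff.mpr hsub) hθ

/-- A planar convex body that is `k`-rotationally symmetric about an interior
point `p` for every integer `k ≥ 2` is the closed disk centered at `p` of
radius `R = sup_{y ∈ C} dist p y`. -/
theorem stmt_16 (C : Set ℂ) (p : ℂ) (hC : IsConvexBody C) (hp : p ∈ interior C)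
    (hsym : ∀ k : ℕ, 2 ≤ k → IsRotSym C p k) :
    C = Metric.closedBall p (circumrad C p) := by
  have hpC : p ∈ C := interior_subset hp
  have hne : C.Nonempty := ⟨p, hpC⟩
  -- farthest point
  obtain ⟨y₀, hy₀, hmax⟩ := hC.1.exists_isMaxOn hne (continuous_const.dist continuous_id).continuousOn
  set r := dist p y₀ with hr
  have hRr : circumrad C p = r := by
    apply le_antisymm
    · apply Real.iSup_le _ dist_nonneg
      intro y
      exact Real.iSup_le (fun hy => hmax hy) dist_nonneg
    · have hb : BddAbove (Set.range fun y => ⨆ _ : y ∈ C, dist p y) := by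
        refine ⟨r, ?_⟩
        rintro _ ⟨y, rfl⟩
        exact Real.iSup_le (fun hy => hmax hy) dist_nonneg
      have := le_ciSup hb y₀
      rwa [ciSup_pos hy₀] at this
  rw [hRr]
  ext z
  constructor
  · intro hz
    rw [mem_closedBall, dist_comm]
    exact hmax hz
  · intro hz
    rw [mem_closedBall, dist_comm] at hz
    rcases eq_or_ne z p with rfl | hzp
    · exact hpC
    · have hw0 : z - p ≠ 0 := sub_ne_zero.mpr hzp
      have hwpos : 0 < ‖z - p‖ := norm_pos_iff.mpr hw0
      have hwr : ‖z - p‖ ≤ r := by rwa [dist_eq_norm'] at hz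
      have hrpos : 0 < r := lt_of_lt_of_le hwpos hwr
      have hrn : r = ‖y₀ - p‖ := by rw [hr, dist_eq_norm, norm_sub_rev]
      have hy0p : y₀ - p ≠ 0 := by
        intro h
        rw [hrn, h, norm_zero] at hrpos
        exact lt_irrefl 0 hrpos
      set c : ℂ := ((r / ‖z - p‖ : ℝ) : ℂ) * (z - p) / (y₀ - p) with hcdef
      have habs : ‖c‖ = 1 := by
        rw [hcdef, norm_div, norm_mul, Complex.norm_of_nonneg (div_pos hrpos hwpos).le, ← hrn]
        rw [div_mul_cancel₀ _ hwpos.ne', div_self hrpos.ne']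
      have hcexp : Complex.exp (c.arg * Complex.I) = c := by
        conv_rhs => rw [← Complex.norm_mul_exp_arg_mul_I c]
        rw [habs, Complex.ofReal_one, one_mul]
      have hmem : p + Complex.exp (c.arg * Complex.I) * (y₀ - p) ∈ C :=
        rot_mem C p hC hsym y₀ hy₀ c.arg
      rw [hcexp] at hmem
      have hcy : c * (y₀ - p) = ((r / ‖z - p‖ : ℝ) : ℂ) * (z - p) := by
        rw [hcdef, div_mul_cancel₀ _ hy0p]
      rw [hcy] at hmem
      set t : ℝ := ‖z - p‖ / r with htdef
      have ht0 : 0 ≤ t := div_nonneg hwpos.le hrpos.le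
      have ht1 : t ≤ 1 := (div_le_one hrpos).mpr hwr
      have hconv := hC.2.1 hpC hmem (sub_nonneg.mpr ht1) ht0 (by ring)
      have hzeq : (1 - t) • p + t • (p + ((r / ‖z - p‖ : ℝ) : ℂ) * (z - p)) = z := by
        rw [Complex.real_smul, Complex.real_smul]
        have hre : t * (r / ‖z - p‖) = 1 := by
          rw [htdef]; field_simp
        have ht : ((t : ℝ) : ℂ) * ((r / ‖z - p‖ : ℝ) : ℂ) = 1 := by
          rw [← Complex.ofReal_mul, hre, Complex.ofReal_one]
        push_cast at ht ⊢
        linear_combination (z - p) * ht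
      rwa [hzeq] at hconv
end
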